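/- For N = ℤ^n and V = {e_1, …, e_n, −(e_1 + ⋯ + e_n)}, R(V) = {±e_i* : 1 ≤ i ≤ n} ∪ {±(e_i* − e_j*) : 1 ≤ i < j ≤ n}, i.e., R(V) is the root system of type A_n. -/
import Mathlib


open Finset

/-- The natural pairing of a functional `a ∈ N* = Hom(ℤ^n, ℤ)` (represented by its
coordinate vector) with `x ∈ N = ℤ^n`. -/
def pairZ {n : ℕ} (a x : Fin n → ℤ) : ℤ := ∑ j, a j * x j

/-- The bilinear form `(α,β) = Σ_i ⟨α,v_i⟩⟨β,v_i⟩` on `N*`. -/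
def formV {n m : ℕ} (v : Fin m → Fin n → ℤ) (a b : Fin n → ℤ) : ℤ :=
  ∑ i, pairZ a (v i) * pairZ b (v i)

/-- Type 1 element: `|⟨α,v_i⟩| = 1` for some `i` and `⟨α,v_k⟩ = 0` for `k ≠ i`. -/
def IsType1 {n m : ℕ} (v : Fin m → Fin n → ℤ) (a : Fin n → ℤ) : Prop :=
  ∃ i, (pairZ a (v i) = 1 ∨ pairZ a (v i) = -1) ∧ ∀ k, k ≠ i → pairZ a (v k) = 0

/-- Type 2 element: `|⟨α,v_i⟩| = |⟨α,v_j⟩| = 1` for some `i ≠ j` and `⟨α,v_k⟩ = 0`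
for `k ≠ i, j`. -/
def IsType2 {n m : ℕ} (v : Fin m → Fin n → ℤ) (a : Fin n → ℤ) : Prop :=
  ∃ i j, i ≠ j ∧ (pairZ a (v i) = 1 ∨ pairZ a (v i) = -1) ∧
    (pairZ a (v j) = 1 ∨ pairZ a (v j) = -1) ∧
    ∀ k, k ≠ i → k ≠ j → pairZ a (v k) = 0

/-- The root system `R(V)` associated to the finite set `V = {v_i}`. -/
def RV {n m : ℕ} (v : Fin m → Fin n → ℤ) : Set (Fin n → ℤ) :=
  {a | IsType1 v a ∨ IsType2 v a}

/-- `V = {e_1, …, e_n, −(e_1 + ⋯ + e_n)}` in `ℤ^n`. -/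
def vA (n : ℕ) : Fin (n + 1) → Fin n → ℤ := fun i =>
  if h : (i : ℕ) < n then Pi.single ⟨i, h⟩ 1 else fun _ => -1



lemma pair_castSucc {n : ℕ} (a : Fin n → ℤ) (i : Fin n) :
    pairZ a (vA n i.castSucc) = a i := by
  have h : ((i.castSucc : Fin (n+1)) : ℕ) < n := i.isLt
  have he : (⟨((i.castSucc : Fin (n+1)) : ℕ), h⟩ : Fin n) = i := by ext; simp
  simp [pairZ, vA, dif_pos h, he, Pi.single_apply, mul_ite]

lemma pair_last {n : ℕ} (a : Fin n → ℤ) :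
    pairZ a (vA n (Fin.last n)) = -∑ j, a j := by
  simp [pairZ, vA, ← Finset.sum_neg_distrib]

lemma sum_pair {n : ℕ} (a : Fin n → ℤ) :
    ∑ i, pairZ a (vA n i) = 0 := by
  rw [Fin.sum_univ_castSucc]
  simp [pair_castSucc, pair_last]

lemma type2_classify {n : ℕ} (a : Fin n → ℤ) (i j : Fin (n+1)) (hij : i ≠ j)
    (hi : pairZ a (vA n i) = 1) (hj : pairZ a (vA n j) = -1)
    (hz : ∀ k, k ≠ i → k ≠ j → pairZ a (vA n k) = 0) :
    ((∃ i : Fin n, a = Pi.single i 1 ∨ a = Pi.single i (-1)) ∨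
     (∃ i j : Fin n, i ≠ j ∧ a = Pi.single i (1:ℤ) - Pi.single j (1:ℤ))) := by
  have hzc : ∀ k : Fin n, k.castSucc ≠ i → k.castSucc ≠ j → a k = 0 := fun k h1 h2 => by
    rw [← pair_castSucc a k]; exact hz _ h1 h2
  rcases Fin.eq_castSucc_or_eq_last i with ⟨i', rfl⟩ | rfl
  · rcases Fin.eq_castSucc_or_eq_last j with ⟨j', rfl⟩ | rfl
    · -- a = e_{i'} - e_{j'}
      have hii : a i' = 1 := by rw [← pair_castSucc a i']; exact hi
      have hjj : a j' = -1 := by rw [← pair_castSucc a j']; exact hj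
      have hne : i' ≠ j' := fun h => hij (by rw [h])
      refine Or.inr ⟨i', j', hne, funext fun x => ?_⟩
      rcases eq_or_ne x i' with rfl | hx1
      · simp [Pi.single_apply, hne, hii]
      · rcases eq_or_ne x j' with rfl | hx2
        · simp [Pi.single_apply, hne.symm, hjj]
        · have := hzc x (by simpa using hx1) (by simpa using hx2)
          simp [Pi.single_apply, hx1, hx2, this]
    · -- a = e_{i'}
      have hii : a i' = 1 := by rw [← pair_castSucc a i']; exact hi
      refine Or.inl ⟨i', Or.inl (funext fun x => ?_)⟩
      rcases eq_or_ne x i' with rfl | hx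
      · simp [hii]
      · have := hzc x (by simpa using hx) (Fin.castSucc_lt_last x).ne
        simp [Pi.single_apply, hx, this]
  · rcases Fin.eq_castSucc_or_eq_last j with ⟨j', rfl⟩ | rfl
    · -- a = -e_{j'}
      have hjj : a j' = -1 := by rw [← pair_castSucc a j']; exact hj
      refine Or.inl ⟨j', Or.inr (funext fun x => ?_)⟩
      rcases eq_or_ne x j' with rfl | hx
      · simp [hjj]
      · have := hzc x (Fin.castSucc_lt_last x).ne (by simpa using hx)
        simp [Pi.single_apply, hx, this]
    · exact absurd rfl hij

/-- For `V = {e_1, …, e_n, −(e_1 + ⋯ + e_n)}`,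
`R(V) = {±e_i*} ∪ {±(e_i* − e_j*) : i < j}`, the root system of type `A_n`. -/
theorem stmt10 {n : ℕ} (a : Fin n → ℤ) :
    a ∈ RV (vA n) ↔
      ((∃ i : Fin n, a = Pi.single i 1 ∨ a = Pi.single i (-1)) ∨
       (∃ i j : Fin n, i ≠ j ∧ a = Pi.single i (1:ℤ) - Pi.single j (1:ℤ))) := by
  constructor
  · rintro (⟨i, hi, hk⟩ | ⟨i, j, hij, hi, hj, hz⟩)
    · exfalso
      have h1 : ∑ k, pairZ a (vA n k) = pairZ a (vA n i) :=
        Finset.sum_eq_single_of_mem i (mem_univ _) (fun k _ hk' => hk k hk')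
      rw [sum_pair a] at h1
      rcases hi with h | h <;> omega
    · have hsum : pairZ a (vA n i) + pairZ a (vA n j) = 0 := by
        rw [← Finset.sum_eq_add_of_mem i j (mem_univ _) (mem_univ _) hij
          (fun k _ h => hz k h.1 h.2), sum_pair]
      rcases hi with hi | hi <;> rcases hj with hj | hj
      · rw [hi, hj] at hsum; omega
      · exact type2_classify a i j hij hi hj hz
      · exact type2_classify a j i hij.symm hj hi (fun k h1 h2 => hz k h2 h1)
      · rw [hi, hj] at hsum; omega
  · rintro (⟨i, rfl | rfl⟩ | ⟨i, j, hij, rfl⟩)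
    · refine Or.inr ⟨i.castSucc, Fin.last n, (Fin.castSucc_lt_last i).ne, ?_, ?_, ?_⟩
      · left; rw [pair_castSucc]; simp
      · right; rw [pair_last]; simp
      · intro k h1 h2
        rcases Fin.eq_castSucc_or_eq_last k with ⟨k', rfl⟩ | rfl
        · rw [pair_castSucc]
          exact Pi.single_eq_of_ne (fun h => h1 (by rw [h])) 1
        · exact absurd rfl h2
    · refine Or.inr ⟨i.castSucc, Fin.last n, (Fin.castSucc_lt_last i).ne, ?_, ?_, ?_⟩
      · right; rw [pair_castSucc]; simp
      · left; rw [pair_last]; simp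
      · intro k h1 h2
        rcases Fin.eq_castSucc_or_eq_last k with ⟨k', rfl⟩ | rfl
        · rw [pair_castSucc]
          exact Pi.single_eq_of_ne (fun h => h1 (by rw [h])) (-1)
        · exact absurd rfl h2
    · refine Or.inr ⟨i.castSucc, j.castSucc, fun h => hij (Fin.castSucc_injective n h),
        ?_, ?_, ?_⟩
      · left; rw [pair_castSucc]; simp [Pi.single_apply, hij]
      · right; rw [pair_castSucc]; simp [Pi.single_apply, hij.symm]
      · intro k h1 h2
        rcases Fin.eq_castSucc_or_eq_last k with ⟨k', rfl⟩ | rfl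
        · have hk1 : k' ≠ i := fun h => h1 (by rw [h])
          have hk2 : k' ≠ j := fun h => h2 (by rw [h])
          rw [pair_castSucc]; simp [Pi.single_apply, hk1, hk2]
        · rw [pair_last]; simp [Pi.single_apply]
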